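/- Let F : Ω → ℝ^M be a random vector with bounded coordinates, each coordinate f^[m] taking values in [a, b], sampled i.i.d. N times as vectors F(ω_1), …, F(ω_N) with mean vector EF. Then for any ξ ∈ ℝ^M with all coordinates positive, Pr{ for every m, |(1/N) Σ_{n=1}^N f^[m](ω_n) − E f^[m]| > ξ^[m] } ≤ 2^M exp( −(2N / (M²(b−a)²)) Σ_{m=1}^M (ξ^[m])² ). -/

import Mathlib

open Real

lemma denom_pos (p : ℝ) (hp0 : 0 ≤ p) (hp1 : p ≤ 1) (s : ℝ) :
    0 < 1 - p + p * Real.exp s := by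
  have h := Real.exp_pos s
  rcases hp0.eq_or_lt with h0 | h0
  · simp [← h0]
  · nlinarith

lemma q_hasDerivAt (p : ℝ) (hp0 : 0 ≤ p) (hp1 : p ≤ 1) (s : ℝ) :
    HasDerivAt (fun s => p * Real.exp s / (1 - p + p * Real.exp s))
      ((p * Real.exp s / (1 - p + p * Real.exp s)) *
        (1 - p * Real.exp s / (1 - p + p * Real.exp s))) s := by
  have hd := denom_pos p hp0 hp1 s
  have hnum : HasDerivAt (fun s => p * Real.exp s) (p * Real.exp s) s :=
    (Real.hasDerivAt_exp s).const_mul p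
  have hden : HasDerivAt (fun s => 1 - p + p * Real.exp s) (p * Real.exp s) s :=
    hnum.const_add (1 - p)
  have := hnum.div hden hd.ne'
  refine this.congr_deriv ?_
  field_simp

lemma q_mem (p : ℝ) (hp0 : 0 ≤ p) (hp1 : p ≤ 1) (s : ℝ) :
    p * Real.exp s / (1 - p + p * Real.exp s) ∈ Set.Icc (0:ℝ) 1 := by
  have hd := denom_pos p hp0 hp1 s
  have h := (Real.exp_pos s).le
  constructor
  · positivity
  · rw [div_le_one hd]; nlinarith

lemma q_close (p : ℝ) (hp0 : 0 ≤ p) (hp1 : p ≤ 1) (s : ℝ) :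
    |p * Real.exp s / (1 - p + p * Real.exp s) - p| ≤ |s| / 4 := by
  set q : ℝ → ℝ := fun s => p * Real.exp s / (1 - p + p * Real.exp s) with hq
  have key : ∀ x ∈ Set.univ, ‖q x * (1 - q x)‖ ≤ 1/4 := by
    intro x _
    obtain ⟨h0, h1⟩ : q x ∈ Set.Icc (0:ℝ) 1 := q_mem p hp0 hp1 x
    rw [Real.norm_eq_abs, abs_le]
    constructor <;> nlinarith [sq_nonneg (q x - 1/2), mul_nonneg h0 (sub_nonneg.mpr h1)]
  have hder : ∀ x ∈ (Set.univ : Set ℝ), HasDerivWithinAt q (q x * (1 - q x)) Set.univ x :=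
    fun x _ => (q_hasDerivAt p hp0 hp1 x).hasDerivWithinAt
  have := convex_univ.norm_image_sub_le_of_norm_hasDerivWithin_le hder key
    (Set.mem_univ 0) (Set.mem_univ s)
  have hq0 : q 0 = p := by simp [hq]
  rw [hq0] at this
  rw [Real.norm_eq_abs] at this
  calc |q s - p| ≤ 1/4 * ‖s - 0‖ := this
    _ = |s| / 4 := by rw [sub_zero, Real.norm_eq_abs]; ring

lemma D_hasDerivAt (p : ℝ) (hp0 : 0 ≤ p) (hp1 : p ≤ 1) (s : ℝ) :
    HasDerivAt (fun s => s^2/8 - (Real.log (1 - p + p * Real.exp s) - p * s))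
      (s/4 - (p * Real.exp s / (1 - p + p * Real.exp s) - p)) s := by
  have hd := denom_pos p hp0 hp1 s
  have hden : HasDerivAt (fun s => 1 - p + p * Real.exp s) (p * Real.exp s) s :=
    ((Real.hasDerivAt_exp s).const_mul p).const_add (1 - p)
  have hlog : HasDerivAt (fun s => Real.log (1 - p + p * Real.exp s))
      (p * Real.exp s / (1 - p + p * Real.exp s)) s := hden.log hd.ne'
  have hsq : HasDerivAt (fun s : ℝ => s^2/8) (s/4) s := by
    have := (hasDerivAt_pow 2 s).div_const 8
    refine this.congr_deriv ?_
    norm_num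
    ring
  have hps : HasDerivAt (fun s : ℝ => p * s) p s := by
    simpa using (hasDerivAt_id s).const_mul p
  exact hsq.sub (hlog.sub hps)

lemma key_analytic (p : ℝ) (hp0 : 0 ≤ p) (hp1 : p ≤ 1) (h : ℝ) :
    Real.log (1 - p + p * Real.exp h) - p * h ≤ h^2 / 8 := by
  set D : ℝ → ℝ := fun s => s^2/8 - (Real.log (1 - p + p * Real.exp s) - p * s) with hD
  have hD0 : D 0 = 0 := by simp [hD]
  have hder : ∀ s, HasDerivAt D (s/4 - (p * Real.exp s / (1 - p + p * Real.exp s) - p)) s :=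
    fun s => D_hasDerivAt p hp0 hp1 s
  have hcont : Continuous D := by
    have : Differentiable ℝ D := fun s => (hder s).differentiableAt
    exact this.continuous
  have hderiv : ∀ s, deriv D s = s/4 - (p * Real.exp s / (1 - p + p * Real.exp s) - p) :=
    fun s => (hder s).deriv
  have key : 0 ≤ D h := by
    rcases le_or_gt 0 h with hh | hh
    · have hmono : MonotoneOn D (Set.Icc 0 h) := by
        apply monotoneOn_of_deriv_nonneg (convex_Icc 0 h) hcont.continuousOn
          (fun x _ => (hder x).differentiableAt.differentiableWithinAt)
        intro x hx
        rw [interior_Icc] at hx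
        rw [hderiv]
        have := q_close p hp0 hp1 x
        rw [abs_of_nonneg hx.1.le] at this
        have := abs_le.mp this
        linarith [this.2]
      have := hmono (Set.left_mem_Icc.mpr hh) (Set.right_mem_Icc.mpr hh) hh
      rwa [hD0] at this
    · have hmono : AntitoneOn D (Set.Icc h 0) := by
        apply antitoneOn_of_deriv_nonpos (convex_Icc h 0) hcont.continuousOn
          (fun x _ => (hder x).differentiableAt.differentiableWithinAt)
        intro x hx
        rw [interior_Icc] at hx
        rw [hderiv]
        have := q_close p hp0 hp1 x
        rw [abs_of_nonpos hx.2.le] at this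
        have := abs_le.mp this
        linarith [this.1]
      have := hmono (Set.left_mem_Icc.mpr hh.le) (Set.right_mem_Icc.mpr hh.le) hh.le
      rwa [hD0] at this
  have : D h = h^2/8 - (Real.log (1 - p + p * Real.exp h) - p * h) := rfl
  linarith [key, this ▸ key]

open MeasureTheory

lemma integrable_of_bdd {Ω : Type*} [MeasurableSpace Ω] {μ : Measure Ω} [IsProbabilityMeasure μ]
    {X : Ω → ℝ} (hX : Measurable X) {C : ℝ} (hC : ∀ ω, |X ω| ≤ C) : Integrable X μ := by
  refine ⟨hX.aestronglyMeasurable, ?_⟩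
  exact MeasureTheory.HasFiniteIntegral.of_bounded (C := C) (Filter.Eventually.of_forall hC)

lemma hoeffding_mgf {Ω : Type*} [MeasurableSpace Ω] (μ : Measure Ω) [IsProbabilityMeasure μ]
    (X : Ω → ℝ) (hX : Measurable X) (a b t : ℝ) (hab : a < b)
    (hbd : ∀ ω, a ≤ X ω ∧ X ω ≤ b) (hmean : ∫ x, X x ∂μ = 0) :
    ∫ ω, Real.exp (t * X ω) ∂μ ≤ Real.exp (t^2 * (b-a)^2 / 8) := by
  have hba : (0:ℝ) < b - a := by linarith
  have hintX : Integrable X μ := integrable_of_bdd hX (C := max |a| |b|) (fun ω => by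
    rcases hbd ω with ⟨h1, h2⟩
    rw [abs_le]
    constructor
    · calc -(max |a| |b|) ≤ -|a| := by simp
        _ ≤ a := neg_abs_le a
        _ ≤ X ω := h1
    · exact h2.trans ((le_abs_self b).trans (le_max_right _ _)))
  have ha0 : a ≤ 0 := by
    have : a = ∫ _, a ∂μ := by simp
    rw [← hmean, this]
    exact integral_mono (integrable_const a) hintX (fun ω => (hbd ω).1)
  have hb0 : 0 ≤ b := by
    have : b = ∫ _, b ∂μ := by simp
    rw [← hmean, this]
    exact integral_mono hintX (integrable_const b) (fun ω => (hbd ω).2)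
  -- pointwise convexity bound
  set c1 : ℝ := (b * Real.exp (t*a) - a * Real.exp (t*b)) / (b - a) with hc1
  set c2 : ℝ := (Real.exp (t*b) - Real.exp (t*a)) / (b - a) with hc2
  have hpt : ∀ ω, Real.exp (t * X ω) ≤ c1 + c2 * X ω := by
    intro ω
    rcases hbd ω with ⟨h1, h2⟩
    set x := X ω
    have hθ1 : 0 ≤ (b - x)/(b - a) := div_nonneg (by linarith) hba.le
    have hθ2 : 0 ≤ (x - a)/(b - a) := by
      apply div_nonneg _ hba.le; linarith
    have hθs : (b - x)/(b - a) + (x - a)/(b - a) = 1 := by field_simp; ring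
    have hcv := convexOn_exp.2 (Set.mem_univ (t*a)) (Set.mem_univ (t*b)) hθ1 hθ2 hθs
    simp only [smul_eq_mul] at hcv
    have hpt : (b - x)/(b - a) * (t*a) + (x - a)/(b - a) * (t*b) = t * x := by
      field_simp
      ring
    rw [hpt] at hcv
    calc Real.exp (t * x) ≤ (b - x)/(b - a) * Real.exp (t*a) + (x - a)/(b - a) * Real.exp (t*b) :=
          hcv
      _ = c1 + c2 * x := by
          rw [hc1, hc2]
          generalize Real.exp (t*a) = Ea
          generalize Real.exp (t*b) = Eb
          field_simp
          ring
  have hintL : Integrable (fun ω => Real.exp (t * X ω)) μ := by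
    apply integrable_of_bdd (hX.const_mul t).exp (C := Real.exp (|t| * max |a| |b|))
    intro ω
    rw [abs_of_nonneg (Real.exp_pos _).le, Real.exp_le_exp]
    calc t * X ω ≤ |t * X ω| := le_abs_self _
      _ = |t| * |X ω| := abs_mul _ _
      _ ≤ |t| * max |a| |b| := by
          apply mul_le_mul_of_nonneg_left _ (abs_nonneg t)
          rcases hbd ω with ⟨h1, h2⟩
          rw [abs_le]
          exact ⟨by calc -(max |a| |b|) ≤ -|a| := by simp
                    _ ≤ a := neg_abs_le a
                    _ ≤ X ω := h1,
                  h2.trans ((le_abs_self b).trans (le_max_right _ _))⟩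
  have hintR : Integrable (fun ω => c1 + c2 * X ω) μ :=
    (integrable_const c1).add (hintX.const_mul c2)
  have step1 : ∫ ω, Real.exp (t * X ω) ∂μ ≤ c1 := by
    calc ∫ ω, Real.exp (t * X ω) ∂μ ≤ ∫ ω, (c1 + c2 * X ω) ∂μ :=
          integral_mono hintL hintR hpt
      _ = c1 + c2 * ∫ ω, X ω ∂μ := by
          rw [integral_add (integrable_const c1) (hintX.const_mul c2)]
          simp [integral_const_mul]
      _ = c1 := by rw [hmean]; ring
  -- now bound c1 by the analytic lemma
  set p : ℝ := -a / (b - a) with hp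
  set h : ℝ := t * (b - a) with hh
  have hp0 : 0 ≤ p := by rw [hp]; apply div_nonneg _ hba.le; linarith
  have hp1 : p ≤ 1 := by rw [hp, div_le_one hba]; linarith
  have hta : t * a = -(p * h) := by rw [hp, hh]; field_simp
  have htb : t * b = h - p * h := by rw [hp, hh]; field_simp; ring
  have e1 : Real.exp (t*b) = Real.exp h * Real.exp (-(p*h)) := by
    rw [htb, ← Real.exp_add]
    ring_nf
  have hc1eq : c1 = Real.exp (-(p*h)) * (1 - p + p * Real.exp h) := by
    rw [hc1, hta, e1, hp]
    generalize Real.exp (-(p*h)) = E1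
    generalize Real.exp h = E2
    field_simp
    ring
  have hkey := key_analytic p hp0 hp1 h
  have hdpos := denom_pos p hp0 hp1 h
  have : c1 ≤ Real.exp (h^2/8) := by
    rw [hc1eq]
    calc Real.exp (-(p*h)) * (1 - p + p * Real.exp h)
        = Real.exp (Real.log (1 - p + p * Real.exp h) - p * h) := by
          rw [Real.exp_sub, Real.exp_log hdpos, Real.exp_neg]; ring
      _ ≤ Real.exp (h^2/8) := Real.exp_le_exp.mpr hkey
  have hhh : h^2/8 = t^2 * (b-a)^2/8 := by rw [hh]; ring
  rw [hhh] at this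
  linarith

lemma mgf_pi {Ω : Type*} [MeasurableSpace Ω] (P : Measure Ω) [IsProbabilityMeasure P]
    (N : ℕ) (g : Ω → ℝ) :
    ∫ ω : Fin N → Ω, Real.exp (∑ n : Fin N, g (ω n)) ∂(Measure.pi fun _ => P)
      = (∫ x, Real.exp (g x) ∂P) ^ N := by
  letI : MeasureSpace Ω := ⟨P⟩
  have hvol : (Measure.pi fun _ : Fin N => P) = (volume : Measure (Fin N → Ω)) := by
    rw [volume_pi]
    rfl
  rw [hvol]
  have : ∀ ω : Fin N → Ω, Real.exp (∑ n : Fin N, g (ω n)) = ∏ n : Fin N, Real.exp (g (ω n)) :=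
    fun ω => Real.exp_sum _ _
  simp_rw [this]
  have := MeasureTheory.integral_fintype_prod_eq_pow (𝕜 := ℝ) (ι := Fin N) (fun x => Real.exp (g x)) (μ := volume)
  rwa [Fintype.card_fin] at this

lemma chernoff_one_sided {Ω : Type*} [MeasurableSpace Ω] (P : Measure Ω) [IsProbabilityMeasure P]
    (N : ℕ) (hN : 1 ≤ N) (g : Ω → ℝ) (hg : Measurable g) (a b : ℝ) (hab : a < b)
    (hbd : ∀ ω, a ≤ g ω ∧ g ω ≤ b) (ξ : ℝ) (hξ : 0 < ξ) :
    (Measure.pi fun _ : Fin N => P)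
        {ω | (N:ℝ) * ξ ≤ ∑ n : Fin N, (g (ω n) - ∫ x, g x ∂P)}
      ≤ ENNReal.ofReal (Real.exp (-2 * N * ξ^2 / (b-a)^2)) := by
  have hba : (0:ℝ) < b - a := by linarith
  set E : ℝ := ∫ x, g x ∂P with hE
  set t : ℝ := 4 * ξ / (b-a)^2 with ht
  have ht0 : 0 < t := by positivity
  set Y : (Fin N → Ω) → ℝ := fun ω => ∑ n : Fin N, (g (ω n) - E) with hY
  have hYmeas : Measurable Y := by
    apply Finset.measurable_sum
    intro n _
    exact (hg.comp (measurable_pi_apply n)).sub measurable_const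
  -- E is between a and b
  have hintg : Integrable g P := integrable_of_bdd hg (C := max |a| |b|) (fun ω => by
    rcases hbd ω with ⟨h1, h2⟩
    rw [abs_le]
    exact ⟨by calc -(max |a| |b|) ≤ -|a| := by simp
              _ ≤ a := neg_abs_le a
              _ ≤ g ω := h1,
            h2.trans ((le_abs_self b).trans (le_max_right _ _))⟩)
  have haE : a ≤ E := by
    rw [hE]
    have : a = ∫ _, a ∂P := by simp
    rw [this]
    exact integral_mono (integrable_const a) hintg (fun ω => (hbd ω).1)
  have hEb : E ≤ b := by
    rw [hE]
    have : b = ∫ _, b ∂P := by simp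
    rw [this]
    exact integral_mono hintg (integrable_const b) (fun ω => (hbd ω).2)
  -- integrability of exp(t * Y)
  have hYbd : ∀ ω, Y ω ≤ N * (b - E) := by
    intro ω
    rw [hY]
    calc ∑ n : Fin N, (g (ω n) - E) ≤ ∑ _n : Fin N, (b - E) :=
          Finset.sum_le_sum (fun n _ => by linarith [(hbd (ω n)).2])
      _ = N * (b - E) := by simp [mul_comm]; ring
  have hint : Integrable (fun ω => Real.exp (t * Y ω)) (Measure.pi fun _ : Fin N => P) := by
    haveI : IsProbabilityMeasure (Measure.pi fun _ : Fin N => P) := by infer_instance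
    apply integrable_of_bdd ((hYmeas.const_mul t).exp)
      (C := Real.exp (t * (N * (b - E))))
    intro ω
    rw [abs_of_nonneg (Real.exp_pos _).le, Real.exp_le_exp]
    exact mul_le_mul_of_nonneg_left (hYbd ω) ht0.le
  -- Chernoff
  have hch := ProbabilityTheory.measure_ge_le_exp_mul_mgf (μ := Measure.pi fun _ : Fin N => P)
    (X := Y) ((N:ℝ) * ξ) ht0.le hint
  -- compute mgf
  have hmgf : ProbabilityTheory.mgf Y (Measure.pi fun _ : Fin N => P) t
      = (∫ x, Real.exp (t * (g x - E)) ∂P) ^ N := by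
    rw [ProbabilityTheory.mgf]
    have : ∀ ω : Fin N → Ω, t * Y ω = ∑ n : Fin N, t * (g (ω n) - E) := by
      intro ω
      rw [hY, Finset.mul_sum]
    simp_rw [this]
    exact mgf_pi P N (fun x => t * (g x - E))
  have hhoeff : ∫ x, Real.exp (t * (g x - E)) ∂P ≤ Real.exp (t^2 * (b-a)^2 / 8) := by
    have h8 := hoeffding_mgf P (fun x => g x - E) (hg.sub measurable_const) (a - E) (b - E) t
      (by linarith)
      (fun ω => ⟨by show a - E ≤ g ω - E; linarith [(hbd ω).1],
                 by show g ω - E ≤ b - E; linarith [(hbd ω).2]⟩)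
      (by rw [integral_sub hintg (integrable_const E)]; simp [hE])
    have hba2 : b - E - (a - E) = b - a := by ring
    rwa [hba2] at h8
  have hpow : ProbabilityTheory.mgf Y (Measure.pi fun _ : Fin N => P) t
      ≤ Real.exp (t^2 * (b-a)^2 / 8) ^ N := by
    rw [hmgf]
    apply pow_le_pow_left₀ _ hhoeff
    exact integral_nonneg (fun x => (Real.exp_pos _).le)
  have hfinal : Real.exp (-t * ((N:ℝ) * ξ)) * Real.exp (t^2 * (b-a)^2 / 8) ^ N
      = Real.exp (-2 * N * ξ^2 / (b-a)^2) := by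
    rw [← Real.exp_nat_mul, ← Real.exp_add]
    congr 1
    rw [ht]
    field_simp
    ring
  have hle : ((Measure.pi fun _ : Fin N => P)
      {ω | (N:ℝ) * ξ ≤ Y ω}).toReal ≤ Real.exp (-2 * N * ξ^2 / (b-a)^2) := by
    calc ((Measure.pi fun _ : Fin N => P) {ω | (N:ℝ) * ξ ≤ Y ω}).toReal
        ≤ Real.exp (-t * ((N:ℝ) * ξ)) * ProbabilityTheory.mgf Y (Measure.pi fun _ : Fin N => P) t := hch
      _ ≤ Real.exp (-t * ((N:ℝ) * ξ)) * Real.exp (t^2 * (b-a)^2 / 8) ^ N := by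
          apply mul_le_mul_of_nonneg_left hpow (Real.exp_pos _).le
      _ = Real.exp (-2 * N * ξ^2 / (b-a)^2) := hfinal
  rw [← ENNReal.ofReal_toReal (measure_ne_top (Measure.pi fun _ : Fin N => P) _)]
  exact ENNReal.ofReal_le_ofReal hle

open Finset

theorem hoeffding_vector
    {Ω : Type*} [MeasurableSpace Ω] (P : Measure Ω) [IsProbabilityMeasure P]
    (M N : ℕ) (hM : 1 ≤ M) (hN : 1 ≤ N) (f : Fin M → Ω → ℝ)
    (hmeas : ∀ m, Measurable (f m))
    (a b : ℝ) (hab : a < b) (hbd : ∀ m ω, a ≤ f m ω ∧ f m ω ≤ b)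
    (ξ : Fin M → ℝ) (hξ : ∀ m, 0 < ξ m) :
    (Measure.pi fun _ : Fin N => P)
        {ω | ∀ m, |(1 / N : ℝ) * ∑ n : Fin N, f m (ω n) - ∫ x, f m x ∂P| > ξ m}
      ≤ ENNReal.ofReal
          (2 ^ M * Real.exp (-(2 * N / (M ^ 2 * (b - a) ^ 2)) * ∑ m : Fin M, (ξ m) ^ 2)) := by
  have hba : (0:ℝ) < b - a := by linarith
  have hNpos : (0:ℝ) < N := by exact_mod_cast hN
  have hMpos : (0:ℝ) < M := by exact_mod_cast hM
  have hM1 : (1:ℝ) ≤ M := by exact_mod_cast hM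
  obtain ⟨m₀, _, hmax⟩ := Finset.exists_max_image (Finset.univ : Finset (Fin M)) ξ
    ⟨⟨0, hM⟩, Finset.mem_univ _⟩
  set ξ₀ : ℝ := ξ m₀ with hξ₀
  have hξ₀pos : 0 < ξ₀ := hξ m₀
  set Em : ℝ := ∫ x, f m₀ x ∂P with hEm
  -- the two one-sided events
  have hA := chernoff_one_sided P N hN (f m₀) (hmeas m₀) a b hab (hbd m₀) ξ₀ hξ₀pos
  have hB := chernoff_one_sided P N hN (fun x => -(f m₀ x)) (hmeas m₀).neg (-b) (-a)
    (by linarith) (fun ω => ⟨by show -b ≤ -(f m₀ ω); linarith [(hbd m₀ ω).2], by show -(f m₀ ω) ≤ -a; linarith [(hbd m₀ ω).1]⟩)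
    ξ₀ hξ₀pos
  have hrw : -a - -b = b - a := by ring
  rw [hrw] at hB
  -- inclusion
  have hsub : {ω : Fin N → Ω | ∀ m, |(1 / N : ℝ) * ∑ n : Fin N, f m (ω n) - ∫ x, f m x ∂P| > ξ m}
      ⊆ {ω : Fin N → Ω | (N:ℝ) * ξ₀ ≤ ∑ n : Fin N, (f m₀ (ω n) - ∫ x, f m₀ x ∂P)}
        ∪ {ω : Fin N → Ω | (N:ℝ) * ξ₀ ≤ ∑ n : Fin N, (-(f m₀ (ω n)) - ∫ x, -(f m₀ x) ∂P)} := by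
    intro ω hω
    have h0 := hω m₀
    have hsum : ∑ n : Fin N, (f m₀ (ω n) - Em)
        = (∑ n : Fin N, f m₀ (ω n)) - N * Em := by
      rw [Finset.sum_sub_distrib]
      simp [mul_comm]
    rcases lt_abs.mp h0 with hc | hc
    · left
      show (N:ℝ) * ξ₀ ≤ ∑ n : Fin N, (f m₀ (ω n) - Em)
      rw [hsum]
      have := (mul_lt_mul_iff_right₀ hNpos).mpr hc
      rw [mul_sub] at this
      have h1 : (N:ℝ) * ((1/N:ℝ) * ∑ n : Fin N, f m₀ (ω n)) = ∑ n : Fin N, f m₀ (ω n) := by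
        field_simp
      rw [h1] at this
      linarith
    · right
      show (N:ℝ) * ξ₀ ≤ ∑ n : Fin N, (-(f m₀ (ω n)) - ∫ x, -(f m₀ x) ∂P)
      have hneg : ∫ x, -(f m₀ x) ∂P = -Em := by rw [integral_neg]
      have hsum2 : ∑ n : Fin N, (-(f m₀ (ω n)) - ∫ x, -(f m₀ x) ∂P)
          = -((∑ n : Fin N, f m₀ (ω n)) - N * Em) := by
        rw [hneg, ← hsum, ← Finset.sum_neg_distrib]
        apply Finset.sum_congr rfl
        intro n _
        ring
      rw [hsum2]
      have h2 := (mul_lt_mul_iff_right₀ hNpos).mpr hc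
      have h1 : (N:ℝ) * ((1/N:ℝ) * ∑ n : Fin N, f m₀ (ω n)) = ∑ n : Fin N, f m₀ (ω n) := by
        field_simp
      rw [mul_neg, mul_sub, h1] at h2
      linarith
  -- combine
  set e1 : ℝ := Real.exp (-2 * N * ξ₀^2 / (b-a)^2) with he1
  have hstep : (Measure.pi fun _ : Fin N => P)
      {ω | ∀ m, |(1 / N : ℝ) * ∑ n : Fin N, f m (ω n) - ∫ x, f m x ∂P| > ξ m}
      ≤ ENNReal.ofReal (2 * e1) := by
    refine le_trans (measure_mono hsub) (le_trans (measure_union_le _ _) ?_)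
    refine le_trans (add_le_add hA hB) ?_
    rw [← ENNReal.ofReal_add (Real.exp_pos _).le (Real.exp_pos _).le, ← two_mul]
  refine hstep.trans (ENNReal.ofReal_le_ofReal ?_)
  -- final real inequality
  have hSle : ∑ m : Fin M, (ξ m)^2 ≤ M * ξ₀^2 := by
    calc ∑ m : Fin M, (ξ m)^2 ≤ ∑ _m : Fin M, ξ₀^2 :=
          Finset.sum_le_sum (fun m _ => by
            have := hmax m (Finset.mem_univ m)
            nlinarith [(hξ m).le])
      _ = M * ξ₀^2 := by simp [mul_comm]
  have hS0 : 0 ≤ ∑ m : Fin M, (ξ m)^2 := Finset.sum_nonneg (fun m _ => sq_nonneg _)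
  have hexp : -2 * N * ξ₀^2 / (b-a)^2 ≤ -(2 * N / (M^2 * (b-a)^2)) * ∑ m : Fin M, (ξ m)^2 := by
    have hkey : (2*(N:ℝ)/((M:ℝ)^2*(b-a)^2)) * ∑ m : Fin M, (ξ m)^2 ≤ 2*N*ξ₀^2/(b-a)^2 := by
      rw [div_mul_eq_mul_div, div_le_div_iff₀ (by positivity) (by positivity)]
      have h1 := mul_le_mul_of_nonneg_left hSle (show (0:ℝ) ≤ 2*N*(b-a)^2 by positivity)
      have h2 := mul_le_mul_of_nonneg_left hM1
        (show (0:ℝ) ≤ 2*N*(b-a)^2*M*ξ₀^2 by positivity)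
      nlinarith [h1, h2]
    calc -2 * (N:ℝ) * ξ₀^2 / (b-a)^2 = -(2 * N * ξ₀^2 / (b-a)^2) := by ring
      _ ≤ -((2 * (N:ℝ) / ((M:ℝ)^2 * (b-a)^2)) * ∑ m : Fin M, (ξ m)^2) := neg_le_neg hkey
      _ = -(2 * N / (M^2 * (b-a)^2)) * ∑ m : Fin M, (ξ m)^2 := by ring
  have h2M : (2:ℝ) ≤ 2^M := by
    calc (2:ℝ) = 2^1 := (pow_one 2).symm
      _ ≤ 2^M := pow_le_pow_right₀ one_le_two hM
  rw [he1]
  exact mul_le_mul h2M (Real.exp_le_exp.mpr hexp) (Real.exp_pos _).le (by positivity)
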